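/- The point aH lies on each of the three circles with centers aA, aB, aC: dist aA aH = dist aA B, dist aB aH = dist aB B, and dist aC aH = dist aC C. -/

import Mathlib

open EuclideanGeometry RealInnerProductSpace

lemma dist_eq_iff_inner' (X P Q : EuclideanSpace ℝ (Fin 2)) :
    dist X P = dist X Q ↔ 2 * ⟪X - Q, P - Q⟫ = ⟪P - Q, P - Q⟫ := by
  have hsq : dist X P = dist X Q ↔ dist X P ^ 2 = dist X Q ^ 2 :=
    ⟨fun h => by rw [h], fun h => by
      rw [show dist X P = √(dist X P^2) from (Real.sqrt_sq dist_nonneg).symm, h,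
        Real.sqrt_sq dist_nonneg]⟩
  rw [hsq, dist_eq_norm, dist_eq_norm, ← real_inner_self_eq_norm_sq,
    ← real_inner_self_eq_norm_sq, show X - P = (X - Q) - (P - Q) by abel,
    real_inner_sub_sub_self]
  constructor <;> intro h <;> linarith

set_option maxHeartbeats 1000000 in
theorem aH_on_three_circles
    (A B C O aA aB aC aH : EuclideanSpace ℝ (Fin 2))
    (hABC : AffineIndependent ℝ ![A, B, C])
    (a b c : ℝ) (ha : a = dist B C) (hb : b = dist C A) (hc : c = dist A B)
    (hO : O = (⟨![A, B, C], hABC⟩ : Affine.Triangle ℝ (EuclideanSpace ℝ (Fin 2))).circumcenter)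
    (haA : aA = EuclideanGeometry.reflection (affineSpan ℝ {B, C}) O)
    (haB1 : dist aB A = dist aB B) (haB2 : ⟪aB - B, C - B⟫ = 0)
    (haC1 : dist aC A = dist aC C) (haC2 : ⟪aC - C, B - C⟫ = 0)
    (haH : aH = (2*b^2 + 2*c^2 - a^2)⁻¹ •
      ((a^2) • A + (b^2 + c^2 - a^2) • B + (b^2 + c^2 - a^2) • C)) :
    dist aA aH = dist aA B ∧ dist aB aH = dist aB B ∧ dist aC aH = dist aC C := by
  -- nondegeneracy
  have hinj := hABC.injective
  have hBC : B ≠ C := fun h => (by decide : (1:Fin 3) ≠ 2) (hinj (by simp [h]))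
  have ha0 : a ≠ 0 := by rw [ha]; exact dist_ne_zero.mpr hBC
  have hapos : 0 ≤ a := ha ▸ dist_nonneg
  have hbpos : 0 ≤ b := hb ▸ dist_nonneg
  have hcpos : 0 ≤ c := hc ▸ dist_nonneg
  have hcol : ¬ Collinear ℝ ({A, B, C} : Set (EuclideanSpace ℝ (Fin 2))) :=
    affineIndependent_iff_not_collinear_set.mp hABC
  have htri : a < c + b := by
    have h1 : dist B C ≤ dist B A + dist A C := dist_triangle _ _ _
    have h2 : dist B A + dist A C ≠ dist B C := by
      intro h
      exact hcol (((dist_add_dist_eq_iff).mp h).collinear.subset (by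
        intro x hx; simp at hx ⊢; tauto))
    have h3 := lt_of_le_of_ne h1 (Ne.symm h2)
    rw [dist_comm B A, dist_comm A C] at h3
    rw [ha, hb, hc]; linarith
  have hs0 : (2*b^2 + 2*c^2 - a^2) ≠ 0 := by nlinarith [sq_nonneg (b - c)]
  have hs1 : b ^ 2 * 2 + c ^ 2 * 2 - a ^ 2 ≠ 0 := by contrapose! hs0; linarith
  have hinv : (2*b^2 + 2*c^2 - a^2)⁻¹ * (2*b^2 + 2*c^2 - a^2) = 1 := inv_mul_cancel₀ hs0
  -- inner product basics
  have hu : ⟪A - B, A - B⟫ = c^2 := by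
    rw [hc, dist_eq_norm, ← real_inner_self_eq_norm_sq]
  have hv : ⟪C - B, C - B⟫ = a^2 := by
    rw [ha, dist_comm, dist_eq_norm, ← real_inner_self_eq_norm_sq]
  have hw : ⟪A - C, A - C⟫ = b^2 := by
    rw [hb, dist_comm, dist_eq_norm, ← real_inner_self_eq_norm_sq]
  have hr : ⟪A - B, C - B⟫ = (a^2 + c^2 - b^2)/2 := by
    have := hw
    rw [show A - C = (A - B) - (C - B) by abel, real_inner_sub_sub_self, hu, hv] at this
    linarith
  have hv' : ⟪B - C, B - C⟫ = a^2 := by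
    rw [← neg_sub C B, inner_neg_neg, hv]
  have hr' : ⟪A - C, B - C⟫ = (a^2 + b^2 - c^2)/2 := by
    have := hu
    rw [show A - B = (A - C) - (B - C) by abel, real_inner_sub_sub_self, hw, hv'] at this
    linarith
  have hr2 : ⟪C - B, A - B⟫ = (a^2 + c^2 - b^2)/2 := by
    rw [real_inner_comm, hr]
  have hr2' : ⟪B - C, A - C⟫ = (a^2 + b^2 - c^2)/2 := by
    rw [real_inner_comm, hr']
  -- aH as combination
  have hHB : aH - B = (2*b^2 + 2*c^2 - a^2)⁻¹ •
      ((a^2) • (A - B) + (b^2 + c^2 - a^2) • (C - B)) := by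
    rw [haH]; match_scalars <;> (field_simp; try ring)
    linear_combination hinv
  have hHC : aH - C = (2*b^2 + 2*c^2 - a^2)⁻¹ •
      ((a^2) • (A - C) + (b^2 + c^2 - a^2) • (B - C)) := by
    rw [haH]; match_scalars <;> (field_simp; try ring)
    linear_combination hinv
  have hhh : ⟪aH - B, aH - B⟫ = (2*b^2 + 2*c^2 - a^2)⁻¹ * (a^2 * c^2) := by
    rw [hHB]
    simp only [real_inner_smul_left, real_inner_smul_right, inner_add_left, inner_add_right,
      hu, hv, hr, hr2]
    linear_combination ((2*b^2 + 2*c^2 - a^2)⁻¹ * a^2 * c^2) * hinv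
  have hhc : ⟪aH - C, aH - C⟫ = (2*b^2 + 2*c^2 - a^2)⁻¹ * (a^2 * b^2) := by
    rw [hHC]
    simp only [real_inner_smul_left, real_inner_smul_right, inner_add_left, inner_add_right,
      hw, hv', hr', hr2']
    linear_combination ((2*b^2 + 2*c^2 - a^2)⁻¹ * a^2 * b^2) * hinv
  refine ⟨?_, ?_, ?_⟩
  · -- aA
    have hdA := (⟨![A,B,C],hABC⟩ : Affine.Triangle ℝ (EuclideanSpace ℝ (Fin 2))).dist_circumcenter_eq_circumradius 0
    have hdB := (⟨![A,B,C],hABC⟩ : Affine.Triangle ℝ (EuclideanSpace ℝ (Fin 2))).dist_circumcenter_eq_circumradius 1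
    have hdC := (⟨![A,B,C],hABC⟩ : Affine.Triangle ℝ (EuclideanSpace ℝ (Fin 2))).dist_circumcenter_eq_circumradius 2
    simp only [Matrix.cons_val_zero, Matrix.cons_val_one, Matrix.head_cons,
      Matrix.cons_val_two, Matrix.tail_cons] at hdA hdB hdC
    have hOA : dist O A = dist O B := by
      rw [hO, dist_comm _ A, dist_comm _ B, hdA, hdB]
    have hOC : dist O C = dist O B := by
      rw [hO, dist_comm _ C, dist_comm _ B, hdC, hdB]
    have hωu : ⟪O - B, A - B⟫ = c^2/2 := by
      have := (dist_eq_iff_inner' O A B).mp hOA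
      rw [hu] at this; linarith
    have hωv : ⟪O - B, C - B⟫ = a^2/2 := by
      have := (dist_eq_iff_inner' O C B).mp hOC
      rw [hv] at this; linarith
    set m : EuclideanSpace ℝ (Fin 2) :=
      (orthogonalProjection (affineSpan ℝ {B, C}) O : EuclideanSpace ℝ (Fin 2)) with hm
    have hmmem : m ∈ affineSpan ℝ ({B, C} : Set (EuclideanSpace ℝ (Fin 2))) :=
      orthogonalProjection_mem O
    have horth := vsub_orthogonalProjection_mem_direction_orthogonal
      (affineSpan ℝ ({B, C} : Set (EuclideanSpace ℝ (Fin 2)))) O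
    have hCB : C -ᵥ B ∈ (affineSpan ℝ ({B, C} : Set (EuclideanSpace ℝ (Fin 2)))).direction := by
      rw [direction_affineSpan]
      exact vsub_mem_vectorSpan ℝ (Set.mem_insert_of_mem _ rfl) (Set.mem_insert _ _)
    have h0 : ⟪O - m, C - B⟫ = 0 := by
      have h1 := (Submodule.mem_orthogonal _ _).mp horth (C -ᵥ B) hCB
      rw [real_inner_comm] at h1
      simpa [vsub_eq_sub] using h1
    obtain ⟨t, ht⟩ : ∃ t : ℝ, t • (C -ᵥ B) = m -ᵥ B := by
      rw [← vadd_left_mem_affineSpan_pair]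
      simpa using hmmem
    have hmB : m - B = t • (C - B) := by
      simp only [vsub_eq_sub] at ht; rw [← ht]
    have htval : t = 1/2 := by
      have h1 := h0
      rw [show O - m = (O - B) - (m - B) by abel, inner_sub_left, hmB,
        real_inner_smul_left, hωv, hv] at h1
      have ha2 : a^2 ≠ 0 := pow_ne_zero 2 ha0
      have : (1/2 - t) * a^2 = 0 := by linarith
      rcases mul_eq_zero.mp this with h | h
      · linarith
      · exact absurd h ha2
    have hγ : aA - B = (C - B) - (O - B) := by
      rw [haA, EuclideanGeometry.reflection_apply']
      simp only [← hm, vsub_eq_sub, vadd_eq_add]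
      rw [show m - O + m - B = (2:ℝ) • (m - B) - (O - B) by module, hmB, htval]
      module
    have hiAu : ⟪aA - B, A - B⟫ = (a^2 - b^2)/2 := by
      rw [hγ, inner_sub_left, hr2, hωu]; ring
    have hiAv : ⟪aA - B, C - B⟫ = a^2/2 := by
      rw [hγ, inner_sub_left, hv, hωv]; ring
    rw [dist_eq_iff_inner' aA aH B, hhh, hHB]
    simp only [real_inner_smul_right, inner_add_right, hiAu, hiAv]
    field_simp
    ring
  · -- aB
    have hiBu : ⟪aB - B, A - B⟫ = c^2/2 := by
      have := (dist_eq_iff_inner' aB A B).mp haB1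
      rw [hu] at this; linarith
    rw [dist_eq_iff_inner' aB aH B, hhh, hHB]
    simp only [real_inner_smul_right, inner_add_right, hiBu, haB2]
    field_simp
    ring
  · -- aC
    have hiCu : ⟪aC - C, A - C⟫ = b^2/2 := by
      have := (dist_eq_iff_inner' aC A C).mp haC1
      rw [hw] at this; linarith
    rw [dist_eq_iff_inner' aC aH C, hhc, hHC]
    simp only [real_inner_smul_right, inner_add_right, hiCu, haC2]
    field_simp
    ring
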